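/- arXiv:1104.2744 — 6 statements merged into one kernel-verified Lean document; each statement's English description precedes it below -/
import Mathlib

section
/- For a deterministic set of rules R on a set X (all conclusions b are singletons), if the class of closed subsets of every set of rules is set-generated (NID), then there is a least R-closed subset of X; in particular, the intersection of any generating set for the R∪{(∅,{*})}-closed subsets of X∪{*}, with * removed, is the least R-closed subset of X. -/
def IsClosedUnder {X : Type*} (R : Set (Set X × Set X)) (Y : Set X) : Prop :=
  ∀ r ∈ R, r.1 ⊆ Y → (r.2 ∩ Y).Nonempty

def SetGenerated {X : Type*} (M : Set (Set X)) : Prop :=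
  ∃ G : Set (Set X), G ⊆ M ∧ ∀ α ∈ M, ∀ x ∈ α, ∃ β ∈ G, x ∈ β ∧ β ⊆ α

/-- The extension of a set of rules `R` on `X` to `X ∪ {*}` (here `Option X`, with
`* = none`), together with the extra rule `(∅, {*})`. -/
def extendedRules {X : Type*} (R : Set (Set X × Set X)) :
    Set (Set (Option X) × Set (Option X)) :=
  {r | ∃ s ∈ R, r = (Option.some '' s.1, Option.some '' s.2)} ∪
  {((∅ : Set (Option X)), {(none : Option X)})}

lemma main_aux (X : Type) (R : Set (Set X × Set X))
    (hdet : ∀ r ∈ R, ∃ x : X, r.2 = {x})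
    (G : Set (Set (Option X)))
    (hG : G ⊆ {Z : Set (Option X) | IsClosedUnder (extendedRules R) Z})
    (hgen : ∀ α : Set (Option X), IsClosedUnder (extendedRules R) α →
        ∀ x ∈ α, ∃ β ∈ G, x ∈ β ∧ β ⊆ α) :
    IsClosedUnder R {x : X | ∀ g ∈ G, Option.some x ∈ g} ∧
      ∀ Y : Set X, IsClosedUnder R Y →
        {x : X | ∀ g ∈ G, Option.some x ∈ g} ⊆ Y := by
  constructor
  · intro r hr hsub
    obtain ⟨x0, hx0⟩ := hdet r hr
    refine ⟨x0, by simp [hx0], ?_⟩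
    intro g hg
    have hcl : IsClosedUnder (extendedRules R) g := hG hg
    have := hcl (Option.some '' r.1, Option.some '' r.2)
      (Or.inl ⟨r, hr, rfl⟩) ?_
    · obtain ⟨y, hy1, hy2⟩ := this
      obtain ⟨z, hz, rfl⟩ := hy1
      rw [hx0] at hz
      simp only [Set.mem_singleton_iff] at hz
      subst hz
      exact hy2
    · rintro y ⟨z, hz, rfl⟩
      exact hsub hz g hg
  · intro Y hY x hx
    set Y' : Set (Option X) := insert none (Option.some '' Y) with hY'
    have hclY' : IsClosedUnder (extendedRules R) Y' := by
      rintro r (⟨s, hs, rfl⟩ | hr) hsub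
      · have hs1 : s.1 ⊆ Y := by
          intro z hz
          have := hsub ⟨z, hz, rfl⟩
          rcases this with h | ⟨w, hw, hwz⟩
          · simp at h
          · cases Option.some_injective X hwz
            exact hw
        obtain ⟨y, hy1, hy2⟩ := hY s hs hs1
        exact ⟨some y, ⟨y, hy1, rfl⟩, Or.inr ⟨y, hy2, rfl⟩⟩
      · simp only [Set.mem_singleton_iff] at hr
        subst hr
        exact ⟨none, rfl, Or.inl rfl⟩
    obtain ⟨β, hβG, _, hβsub⟩ := hgen Y' hclY' none (Or.inl rfl)
    have hsx : some x ∈ β := hx β hβG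
    have := hβsub hsx
    rcases this with h | ⟨w, hw, hwx⟩
    · simp at h
    · cases Option.some_injective X hwx
      exact hw

/-- for a deterministic set of rules `R` on `X`, NID implies there is a
least `R`-closed subset of `X`; in particular, for any generating set `G` for the
`R ∪ {(∅,{*})}`-closed subsets of `X ∪ {*}`, the intersection `⋂ G` with `*` removed
is the least `R`-closed subset of `X`. -/
theorem NID_implies_least_closed (X : Type) (R : Set (Set X × Set X))
    (hdet : ∀ r ∈ R, ∃ x : X, r.2 = {x})
    (hNID : ∀ (Y : Type) (S : Set (Set Y × Set Y)),
      SetGenerated {Z : Set Y | IsClosedUnder S Z}) :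
    (∃ L : Set X, IsClosedUnder R L ∧ ∀ Y : Set X, IsClosedUnder R Y → L ⊆ Y) ∧
    (∀ G : Set (Set (Option X)),
      (G ⊆ {Z : Set (Option X) | IsClosedUnder (extendedRules R) Z}) →
      (∀ α : Set (Option X), IsClosedUnder (extendedRules R) α →
        ∀ x ∈ α, ∃ β ∈ G, x ∈ β ∧ β ⊆ α) →
      (IsClosedUnder R {x : X | ∀ g ∈ G, Option.some x ∈ g} ∧
        ∀ Y : Set X, IsClosedUnder R Y →
          {x : X | ∀ g ∈ G, Option.some x ∈ g} ⊆ Y)) := by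
  constructor
  · obtain ⟨G, hG, hgen⟩ := hNID (Option X) (extendedRules R)
    obtain ⟨h1, h2⟩ := main_aux X R hdet G hG hgen
    exact ⟨_, h1, h2⟩
  · exact fun G hG hgen => main_aux X R hdet G hG hgen
end

section
/- Let f : B → A be a function and let P_f be the associated polynomial functor. The set M of all subsets m of the set P of odd-length paths ⟨a₀,b₀,…,aₙ⟩ (with aᵢ ∈ A, bᵢ ∈ B, f(bᵢ)=aᵢ) satisfying: (1) there is a unique a ∈ A with ⟨a⟩ ∈ m; (2) for every σ = ⟨a₀,b₀,…,aₙ⟩ ∈ m and every b ∈ f⁻¹(aₙ) there is a unique a with σ*⟨b,a⟩ ∈ m; (3) m is closed under initial segments — carries a canonical P_f-coalgebra structure and is the final P_f-coalgebra (the M-type of f). -/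
/-- A path `⟨a₀,b₀,a₁,b₁,…,aₙ⟩` is represented as a list of pairs `(aᵢ,bᵢ)` (for `i < n`)
together with the final element `aₙ`. `IsMTree f m` says that `m` is a set of valid paths
(i.e. `f bᵢ = aᵢ` throughout) such that: (1) there is a unique `a` with `⟨a⟩ ∈ m`;
(2) for every `σ = ⟨a₀,b₀,…,aₙ⟩ ∈ m` and every `b ∈ f⁻¹(aₙ)` there is a unique `a`
with `σ*⟨b,a⟩ ∈ m`; (3) `m` is closed under initial segments. -/
def IsMTree {A B : Type*} (f : B → A) (m : Set (List (A × B) × A)) : Prop :=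
  (∀ p ∈ m, ∀ q ∈ p.1, f q.2 = q.1) ∧
  (∃! a : A, (([] : List (A × B)), a) ∈ m) ∧
  (∀ l (an : A), (l, an) ∈ m → ∀ b : B, f b = an →
    ∃! a : A, (l ++ [(an, b)], a) ∈ m) ∧
  (∀ (l₁ : List (A × B)) (a' : A) (b' : B) (l₂ : List (A × B)) (a : A),
    (l₁ ++ (a', b') :: l₂, a) ∈ m → (l₁, a') ∈ m)

/-- The candidate M-type: the set of all `m` satisfying `IsMTree f`. -/
def MTy {A B : Type*} (f : B → A) : Type _ := {m : Set (List (A × B) × A) // IsMTree f m}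

section Aux

variable {A B : Type} {f : B → A}

lemma subtree_isMTree {m : Set (List (A × B) × A)} (hm : IsMTree f m)
    {a : A} (ha : (([] : List (A × B)), a) ∈ m) {b : B} (hb : f b = a) :
    IsMTree f {σ : List (A × B) × A | ((a, b) :: σ.1, σ.2) ∈ m} := by
  obtain ⟨hval, _hroot, hsucc, hclose⟩ := hm
  refine ⟨?_, ?_, ?_, ?_⟩
  · intro p hp q hq
    exact hval _ hp q (List.mem_cons_of_mem _ hq)
  · simpa using hsucc [] a ha b hb
  · intro l an hl b' hb'
    simpa using hsucc ((a, b) :: l) an hl b' hb'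
  · intro l₁ a' b' l₂ a'' hmem
    exact hclose ((a, b) :: l₁) a' b' l₂ a'' hmem

/-- The coalgebra structure map on `MTy f`. -/
noncomputable def uFun (m : MTy f) : Σ a : A, ({b : B // f b = a} → MTy f) :=
  ⟨m.2.2.1.choose, fun b =>
    ⟨{σ : List (A × B) × A | (m.2.2.1.choose, b.1) :: σ.1 ∈ (Prod.fst '' m.1) ∧
        ((m.2.2.1.choose, b.1) :: σ.1, σ.2) ∈ m.1},
      by
        have := subtree_isMTree m.2 m.2.2.1.choose_spec.1 b.2
        convert this using 1
        ext σ
        exact ⟨fun h => h.2, fun h => ⟨⟨_, h, rfl⟩, h⟩⟩⟩⟩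

/-- Membership in the unfolding of a coalgebra `v` starting from `x`. -/
def memP {X : Type} (v : X → Σ a : A, ({b : B // f b = a} → X)) :
    X → List (A × B) → A → Prop
  | x, [], a => a = (v x).1
  | x, (a0, b0) :: l, a =>
      ∃ hb : f b0 = (v x).1, a0 = (v x).1 ∧ memP v ((v x).2 ⟨b0, hb⟩) l a

variable {X : Type} (v : X → Σ a : A, ({b : B // f b = a} → X))

lemma memP_valid : ∀ (l : List (A × B)) (x : X) (a : A), memP v x l a →
    ∀ q ∈ l, f q.2 = q.1
  | [], _, _ => fun _ => by simp
  | (a0, b0) :: l, x, a => by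
    rintro ⟨hb, ha0, hrest⟩ q hq
    rcases List.mem_cons.1 hq with h | h
    · subst h; exact hb.trans ha0.symm
    · exact memP_valid l _ a hrest q h

lemma memP_succ : ∀ (l : List (A × B)) (x : X) (an : A), memP v x l an →
    ∀ b : B, f b = an → ∃! a : A, memP v x (l ++ [(an, b)]) a
  | [], x, an, han, b, hb => by
    subst han
    refine ⟨(v ((v x).2 ⟨b, hb⟩)).1, ⟨hb, rfl, rfl⟩, ?_⟩
    rintro y ⟨hb', -, hy⟩
    exact hy
  | (a0, b0) :: l, x, an, han, b, hb => by
    obtain ⟨hb0, ha0, hrest⟩ := han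
    obtain ⟨a, ha, hau⟩ := memP_succ l ((v x).2 ⟨b0, hb0⟩) an hrest b hb
    refine ⟨a, ⟨hb0, ha0, ha⟩, ?_⟩
    rintro y ⟨hb0', -, hy⟩
    exact hau y hy

lemma memP_closed : ∀ (l₁ : List (A × B)) (x : X) (a' : A) (b' : B)
    (l₂ : List (A × B)) (a : A),
    memP v x (l₁ ++ (a', b') :: l₂) a → memP v x l₁ a'
  | [], x, a', b', l₂, a => by
    rintro ⟨hb, ha', -⟩
    exact ha'
  | (a0, b0) :: l₁, x, a', b', l₂, a => by
    rintro ⟨hb0, ha0, hrest⟩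
    exact ⟨hb0, ha0, memP_closed l₁ _ a' b' l₂ a hrest⟩

lemma memP_isMTree (x : X) : IsMTree f {σ : List (A × B) × A | memP v x σ.1 σ.2} := by
  refine ⟨?_, ?_, ?_, ?_⟩
  · intro p hp q hq
    exact memP_valid v p.1 x p.2 hp q hq
  · exact ⟨(v x).1, rfl, fun y hy => hy⟩
  · intro l an hl b hb
    exact memP_succ v l x an hl b hb
  · intro l₁ a' b' l₂ a hmem
    exact memP_closed v l₁ x a' b' l₂ a hmem

/-- The unfolding morphism. -/
def hFun (x : X) : MTy f := ⟨{σ : List (A × B) × A | memP v x σ.1 σ.2}, memP_isMTree v x⟩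

lemma sigEq {M : Type*} {a a' : A} (ha : a = a')
    (g : {b : B // f b = a} → M) (g' : {b : B // f b = a'} → M)
    (hg : ∀ (b : B) (hb : f b = a), g ⟨b, hb⟩ = g' ⟨b, hb.trans ha⟩) :
    (⟨a, g⟩ : Σ a : A, ({b : B // f b = a} → M)) = ⟨a', g'⟩ := by
  subst ha
  have hgg : g = g' := by
    funext b
    obtain ⟨b, hb⟩ := b
    exact hg b hb
  rw [hgg]

end Aux

/-- `MTy f` carries a canonical `P_f`-coalgebra structure (root labelling and
subtree extraction) and is the final `P_f`-coalgebra, where `P_f X = Σ a : A, (f⁻¹(a) → X)`. -/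
theorem MTy_is_final_coalgebra (A B : Type) (f : B → A) :
    ∃ u : MTy f → Σ a : A, ({b : B // f b = a} → MTy f),
      (∀ m : MTy f,
        (([], (u m).1) ∈ m.val) ∧
        ∀ b : {b : B // f b = (u m).1},
          ((u m).2 b).val = {σ : List (A × B) × A |
            (((u m).1, b.val) :: σ.1, σ.2) ∈ m.val}) ∧
      (∀ (X : Type) (v : X → Σ a : A, ({b : B // f b = a} → X)),
        ∃! h : X → MTy f,
          ∀ x : X, u (h x) = ⟨(v x).1, fun b => h ((v x).2 b)⟩) := by
  classical
  refine ⟨uFun, ?_⟩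
  have uspec : ∀ m : MTy f,
      ((([] : List (A × B)), (uFun m).1) ∈ m.val) ∧
      ∀ b : {b : B // f b = (uFun m).1},
        ((uFun m).2 b).val = {σ : List (A × B) × A |
          (((uFun m).1, b.val) :: σ.1, σ.2) ∈ m.val} := by
    intro m
    constructor
    · exact m.2.2.1.choose_spec.1
    · intro b
      ext σ
      exact ⟨fun h => h.2, fun h => ⟨⟨_, h, rfl⟩, h⟩⟩
  refine ⟨uspec, ?_⟩
  intro X v
  -- existence
  have hcomm : ∀ x : X, uFun (hFun v x) = ⟨(v x).1, fun b => hFun v ((v x).2 b)⟩ := by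
    intro x
    have hroot : (uFun (hFun v x)).1 = (v x).1 := by
      have h1 := (uspec (hFun v x)).1
      exact h1
    rw [← Sigma.eta (uFun (hFun v x))]
    refine sigEq hroot _ _ ?_
    intro b hb
    apply Subtype.ext
    have h2 := (uspec (hFun v x)).2 ⟨b, hb⟩
    rw [h2]
    ext σ
    show memP v x (((uFun (hFun v x)).1, b) :: σ.1) σ.2 ↔
      memP v ((v x).2 ⟨b, hb.trans hroot⟩) σ.1 σ.2
    constructor
    · rintro ⟨hb', ha', h⟩
      exact h
    · intro h
      exact ⟨hb.trans hroot, hroot, h⟩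
  refine ⟨hFun v, hcomm, ?_⟩
  -- uniqueness
  intro h' hcomm'
  funext x
  apply Subtype.ext
  ext ⟨l, a⟩
  show (l, a) ∈ (h' x).val ↔ memP v x l a
  induction l generalizing x a with
  | nil =>
    have hroot : ((([] : List (A × B)), (v x).1)) ∈ (h' x).val := by
      have := (uspec (h' x)).1
      rwa [hcomm' x] at this
    constructor
    · intro hmem
      exact (h' x).2.2.1.unique hmem hroot
    · intro hmem
      show (([] : List (A × B)), a) ∈ (h' x).val
      rw [hmem]; exact hroot
  | cons q l ih =>
    obtain ⟨a0, b0⟩ := q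
    have hroot : ((([] : List (A × B)), (v x).1)) ∈ (h' x).val := by
      have := (uspec (h' x)).1
      rwa [hcomm' x] at this
    have hsub : ∀ (b : B) (hb : f b = (v x).1),
        ((h' ((v x).2 ⟨b, hb⟩)).val : Set (List (A × B) × A)) =
          {σ : List (A × B) × A | (((v x).1, b) :: σ.1, σ.2) ∈ (h' x).val} := by
      intro b hb
      have h2 := (uspec (h' x)).2
      rw [hcomm' x] at h2
      exact h2 ⟨b, hb⟩
    constructor
    · intro hmem
      have hb0 : f b0 = a0 := (h' x).2.1 _ hmem (a0, b0) List.mem_cons_self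
      have ha0 : a0 = (v x).1 := by
        have h0 : (([] : List (A × B)), a0) ∈ (h' x).val :=
          (h' x).2.2.2.2 [] a0 b0 l a hmem
        exact (h' x).2.2.1.unique h0 hroot
      refine ⟨hb0.trans ha0, ha0, ?_⟩
      apply (ih ((v x).2 ⟨b0, hb0.trans ha0⟩) a).1
      rw [hsub b0 (hb0.trans ha0)]
      show (((v x).1, b0) :: l, a) ∈ (h' x).val
      rwa [← ha0]
    · rintro ⟨hb0, ha0, hmem⟩
      have := (ih ((v x).2 ⟨b0, hb0⟩) a).2 hmem
      rw [hsub b0 hb0] at this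
      show ((a0, b0) :: l, a) ∈ (h' x).val
      rw [ha0]
      exact this
end

section
/- Let f : B → A be a function with final P_f-coalgebra u : M → P_f(M) with inverse sup. The least subset of M closed under the deterministic rules ({t(b) : b ∈ f⁻¹(a)}, {sup(a,t)}) for all a ∈ A and t : f⁻¹(a) → M, equipped with the restricted algebra structure, is an initial P_f-algebra (the W-type of f). -/
/-- The least subset of `M` closed under the deterministic rules
`({t(b) : b ∈ f⁻¹(a)}, {sup(a,t)})`: an element lies in it iff it lies in every
subset closed under all these rules. -/
def leastSupClosed {A B M : Type*} (f : B → A)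
    (sup : (Σ a : A, ({b : B // f b = a} → M)) → M) : Set M :=
  {m | ∀ Y : Set M,
    (∀ (a : A) (t : {b : B // f b = a} → M), (∀ b, t b ∈ Y) → sup ⟨a, t⟩ ∈ Y) →
    m ∈ Y}

namespace LSCaux

variable {A B M : Type} (f : B → A)
  (sup : (Σ a : A, ({b : B // f b = a} → M)) → M)

/-- Fold a W-type element into `M` using `sup`. -/
def toM : WType (fun a : A => {b : B // f b = a}) → M
  | WType.mk a t => sup ⟨a, fun b => toM (t b)⟩

theorem toM_mem (w : WType (fun a : A => {b : B // f b = a})) :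
    toM f sup w ∈ leastSupClosed f sup := by
  induction w with
  | mk a t ih =>
    intro Y hY
    exact hY a (fun b => toM f sup (t b)) (fun b => ih b Y hY)

theorem mem_iff (m : M) :
    m ∈ leastSupClosed f sup ↔ ∃ w, toM f sup w = m := by
  constructor
  · intro hm
    refine hm {m | ∃ w, toM f sup w = m} ?_
    intro a t ht
    choose w hw using ht
    exact ⟨WType.mk a w, by simp [toM, hw]⟩
  · rintro ⟨w, rfl⟩
    exact toM_mem f sup w

theorem toM_inj (u : M → Σ a : A, ({b : B // f b = a} → M))
    (hsup₂ : ∀ y, u (sup y) = y) : Function.Injective (toM f sup) := by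
  intro w
  induction w with
  | mk a t ih =>
    rintro ⟨a', t'⟩ h
    have h2 : (⟨a, fun b => toM f sup (t b)⟩ : Σ a : A, ({b : B // f b = a} → M))
        = ⟨a', fun b => toM f sup (t' b)⟩ := by
      have := congrArg u h
      rwa [toM, toM, hsup₂, hsup₂] at this
    obtain ⟨rfl, h3⟩ := Sigma.mk.inj_iff.mp h2
    have h4 : (fun b => toM f sup (t b)) = fun b => toM f sup (t' b) := eq_of_heq h3
    have : t = t' := funext fun b => ih b (congrFun h4 b)
    rw [this]

/-- Fold a W-type element into an algebra `X`. -/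
def wfold {X : Type} (s : (Σ a : A, ({b : B // f b = a} → X)) → X) :
    WType (fun a : A => {b : B // f b = a}) → X
  | WType.mk a t => s ⟨a, fun b => wfold s (t b)⟩

end LSCaux

/-- if `u : M → P_f(M)` is a final `P_f`-coalgebra with inverse `sup`
(Lambek), then the least subset of `M` closed under the rules
`({t(b) : b ∈ f⁻¹(a)}, {sup(a,t)})`, with the restricted algebra structure, is an
initial `P_f`-algebra (the W-type of `f`). -/
theorem leastSupClosed_is_initial_algebra (A B : Type) (f : B → A) (M : Type)
    (u : M → Σ a : A, ({b : B // f b = a} → M))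
    (hfinal : ∀ (X : Type) (v : X → Σ a : A, ({b : B // f b = a} → X)),
      ∃! h : X → M, ∀ x : X, u (h x) = ⟨(v x).1, fun b => h ((v x).2 b)⟩)
    (sup : (Σ a : A, ({b : B // f b = a} → M)) → M)
    (hsup₁ : ∀ m : M, sup (u m) = m)
    (hsup₂ : ∀ y, u (sup y) = y) :
    (∀ (a : A) (t : {b : B // f b = a} → M),
      (∀ b, t b ∈ leastSupClosed f sup) → sup ⟨a, t⟩ ∈ leastSupClosed f sup) ∧
    (∀ (X : Type) (s : (Σ a : A, ({b : B // f b = a} → X)) → X),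
      ∃! h : (leastSupClosed f sup) → X,
        ∀ (a : A) (t : {b : B // f b = a} → M)
          (ht : ∀ b, t b ∈ leastSupClosed f sup)
          (hs : sup ⟨a, t⟩ ∈ leastSupClosed f sup),
          h ⟨sup ⟨a, t⟩, hs⟩ = s ⟨a, fun b => h ⟨t b, ht b⟩⟩) := by
  open LSCaux in
  refine ⟨fun a t ht Y hY => hY a t (fun b => ht b Y hY), ?_⟩
  intro X s
  have inj := LSCaux.toM_inj f sup u hsup₂
  -- the candidate map
  set h : {m : M // m ∈ leastSupClosed f sup} → X :=
    fun m => LSCaux.wfold f s (Classical.choose ((LSCaux.mem_iff f sup m.1).mp m.2)) with hh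
  have hspec : ∀ (m : {m : M // m ∈ leastSupClosed f sup}) (w),
      LSCaux.toM f sup w = m.1 → h m = LSCaux.wfold f s w := by
    rintro m w hw
    have h1 := Classical.choose_spec ((LSCaux.mem_iff f sup m.1).mp m.2)
    have : Classical.choose ((LSCaux.mem_iff f sup m.1).mp m.2) = w :=
      inj (by rw [h1, hw])
    exact congrArg (LSCaux.wfold f s) this
  have hprop : ∀ (a : A) (t : {b : B // f b = a} → M)
      (ht : ∀ b, t b ∈ leastSupClosed f sup)
      (hs : sup ⟨a, t⟩ ∈ leastSupClosed f sup),
      h ⟨sup ⟨a, t⟩, hs⟩ = s ⟨a, fun b => h ⟨t b, ht b⟩⟩ := by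
    intro a t ht hs
    choose w hw using fun b => (LSCaux.mem_iff f sup (t b)).mp (ht b)
    have hW : LSCaux.toM f sup (WType.mk a w) = sup ⟨a, t⟩ := by
      simp [LSCaux.toM, hw]
    rw [hspec ⟨sup ⟨a, t⟩, hs⟩ _ hW]
    have : ∀ b, h ⟨t b, ht b⟩ = LSCaux.wfold f s (w b) :=
      fun b => hspec ⟨t b, ht b⟩ (w b) (hw b)
    simp only [LSCaux.wfold, this]
  refine ⟨h, hprop, ?_⟩
  intro g hg
  funext m
  obtain ⟨w, hw⟩ := (LSCaux.mem_iff f sup m.1).mp m.2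
  have key : ∀ (w) (hm : LSCaux.toM f sup w ∈ leastSupClosed f sup),
      g ⟨LSCaux.toM f sup w, hm⟩ = h ⟨LSCaux.toM f sup w, hm⟩ := by
    intro w
    induction w with
    | mk a t ih =>
      intro hm
      have hm' : ∀ b, LSCaux.toM f sup (t b) ∈ leastSupClosed f sup :=
        fun b => LSCaux.toM_mem f sup (t b)
      have hmk : LSCaux.toM f sup (WType.mk a t)
          = sup ⟨a, fun b => LSCaux.toM f sup (t b)⟩ := rfl
      have e1 := hg a (fun b => LSCaux.toM f sup (t b)) hm' (hmk ▸ hm)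
      have e2 := hprop a (fun b => LSCaux.toM f sup (t b)) hm' (hmk ▸ hm)
      simp only [← hmk] at e1 e2
      rw [e1, e2]
      exact congrArg (fun z => s ⟨a, z⟩) (funext fun b => ih b (hm' b))
  obtain ⟨mv, hmv⟩ := m
  subst hw
  exact key w _
end

section
/- Let T be a game theory over a set of propositional letters P, and let S be the set of subformulae occurring in T together with P. Define a set of rules on S comprising: ({⋀ᵢφᵢ},{φ_{i₀}}) for each conjunction in S and i₀ ∈ I; ({⋁ᵢφᵢ},{φᵢ : i ∈ I}) for each disjunction in S; ({φᵢ : i∈I},{⋀ᵢφᵢ}) for each conjunction in S; ({φ_{i₀}},{⋁ᵢφᵢ}) for each disjunction in S and i₀ ∈ I; and ({φ},{ψ}) for each sequent φ→ψ ∈ T. Then: (a) if M ⊆ P is a model of T, the set {φ ∈ S : M ⊨ φ} is closed under these rules; (b) conversely, if X ⊆ S is closed, then M = X ∩ P is a model of T, and for all φ ∈ S, φ ∈ X iff M ⊨ φ. -/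
/-- Game formulae over a set of propositional letters `P`: letters, set-indexed
conjunctions and set-indexed disjunctions. -/
inductive GameFormula (P : Type) : Type 1
  | letter : P → GameFormula P
  | conj : (I : Type) → (I → GameFormula P) → GameFormula P
  | disj : (I : Type) → (I → GameFormula P) → GameFormula P

/-- Satisfaction of a game formula in a model `M ⊆ P`. -/
def Sat {P : Type} (M : Set P) : GameFormula P → Prop
  | .letter p => p ∈ M
  | .conj _ φ => ∀ i, Sat M (φ i)
  | .disj _ φ => ∃ i, Sat M (φ i)

/-- `Subformula φ ψ`: `φ` is a subformula of `ψ`. -/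
inductive Subformula {P : Type} : GameFormula P → GameFormula P → Prop
  | refl (φ : GameFormula P) : Subformula φ φ
  | conj {I : Type} {φ : I → GameFormula P} {ψ : GameFormula P} (i : I) :
      Subformula ψ (φ i) → Subformula ψ (.conj I φ)
  | disj {I : Type} {φ : I → GameFormula P} {ψ : GameFormula P} (i : I) :
      Subformula ψ (φ i) → Subformula ψ (.disj I φ)

/-- `S`: the letters of `P` together with the subformulae of the theory `T`. -/
def subSet {P : Type} (T : Set (GameFormula P × GameFormula P)) : Set (GameFormula P) :=
  {φ | ∃ p : P, φ = .letter p} ∪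
  {φ | ∃ s ∈ T, Subformula φ s.1 ∨ Subformula φ s.2}

/-- The rules on `S` associated to a game theory `T`: conjunction elimination and
introduction, disjunction elimination and introduction, and the sequents of `T`. -/
def gameRules {P : Type} (T : Set (GameFormula P × GameFormula P)) :
    Set (Set (GameFormula P) × Set (GameFormula P)) :=
  {r | ∃ (I : Type) (φ : I → GameFormula P), GameFormula.conj I φ ∈ subSet T ∧
        ∃ i₀ : I, r = ({GameFormula.conj I φ}, {φ i₀})} ∪
  {r | ∃ (I : Type) (φ : I → GameFormula P), GameFormula.disj I φ ∈ subSet T ∧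
        r = ({GameFormula.disj I φ}, Set.range φ)} ∪
  {r | ∃ (I : Type) (φ : I → GameFormula P), GameFormula.conj I φ ∈ subSet T ∧
        r = (Set.range φ, {GameFormula.conj I φ})} ∪
  {r | ∃ (I : Type) (φ : I → GameFormula P), GameFormula.disj I φ ∈ subSet T ∧
        ∃ i₀ : I, r = ({φ i₀}, {GameFormula.disj I φ})} ∪
  {r | ∃ s ∈ T, r = ({s.1}, {s.2})}


theorem Subformula.trans {P : Type} {a b c : GameFormula P}
    (h1 : Subformula a b) (h2 : Subformula b c) : Subformula a c := by
  induction h2 with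
  | refl => exact h1
  | conj i _ ih => exact Subformula.conj i (ih h1)
  | disj i _ ih => exact Subformula.disj i (ih h1)

theorem subSet_sub {P : Type} {T : Set (GameFormula P × GameFormula P)}
    {ψ φ : GameFormula P} (h : φ ∈ subSet T) (hs : Subformula ψ φ) :
    ψ ∈ subSet T := by
  rcases h with ⟨p, rfl⟩ | ⟨s, hsT, h⟩
  · cases hs; exact Or.inl ⟨p, rfl⟩
  · exact Or.inr ⟨s, hsT, h.imp (hs.trans ·) (hs.trans ·)⟩

theorem conj_comp {P : Type} {T : Set (GameFormula P × GameFormula P)}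
    {I : Type} {φ : I → GameFormula P} (h : GameFormula.conj I φ ∈ subSet T) (i : I) :
    φ i ∈ subSet T :=
  subSet_sub h (Subformula.conj i (Subformula.refl _))

theorem disj_comp {P : Type} {T : Set (GameFormula P × GameFormula P)}
    {I : Type} {φ : I → GameFormula P} (h : GameFormula.disj I φ ∈ subSet T) (i : I) :
    φ i ∈ subSet T :=
  subSet_sub h (Subformula.disj i (Subformula.refl _))

/-- (a) if `M ⊆ P` is a model of `T`, then `{φ ∈ S : M ⊨ φ}` is closed
under the rules; (b) conversely, if `X ⊆ S` is closed, then `M = X ∩ P` is a model of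
`T` and for all `φ ∈ S`, `φ ∈ X` iff `M ⊨ φ`. -/
theorem gameRules_closed_iff_model (P : Type)
    (T : Set (GameFormula P × GameFormula P)) :
    (∀ M : Set P, (∀ s ∈ T, Sat M s.1 → Sat M s.2) →
      IsClosedUnder (gameRules T) {φ | φ ∈ subSet T ∧ Sat M φ}) ∧
    (∀ X : Set (GameFormula P), X ⊆ subSet T → IsClosedUnder (gameRules T) X →
      ((∀ s ∈ T, Sat {p : P | GameFormula.letter p ∈ X} s.1 →
          Sat {p : P | GameFormula.letter p ∈ X} s.2) ∧
        ∀ φ ∈ subSet T, (φ ∈ X ↔ Sat {p : P | GameFormula.letter p ∈ X} φ))) := by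
  constructor
  · intro M hM r hr ha
    rcases hr with ((((⟨I, φ, hS, i₀, rfl⟩ | ⟨I, φ, hS, rfl⟩) | ⟨I, φ, hS, rfl⟩) |
        ⟨I, φ, hS, i₀, rfl⟩) | ⟨s, hsT, rfl⟩)
    · have h := ha (Set.mem_singleton _)
      exact ⟨φ i₀, rfl, conj_comp hS i₀, h.2 i₀⟩
    · have h := ha (Set.mem_singleton _)
      obtain ⟨i, hi⟩ := h.2
      exact ⟨φ i, ⟨i, rfl⟩, disj_comp hS i, hi⟩
    · exact ⟨_, rfl, hS, fun i => (ha ⟨i, rfl⟩).2⟩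
    · have h := ha (Set.mem_singleton _)
      exact ⟨_, rfl, hS, ⟨i₀, h.2⟩⟩
    · have h := ha (Set.mem_singleton _)
      refine ⟨s.2, rfl, Or.inr ⟨s, hsT, Or.inr (Subformula.refl _)⟩, hM s hsT h.2⟩
  · intro X hX hC
    set M : Set P := {p : P | GameFormula.letter p ∈ X} with hMdef
    have key : ∀ φ : GameFormula P, φ ∈ subSet T → (φ ∈ X ↔ Sat M φ) := by
      intro φ
      induction φ with
      | letter p => exact fun _ => Iff.rfl
      | conj I φ ih =>
        intro hS
        constructor
        · intro hx i
          have hr : (({GameFormula.conj I φ}, {φ i}) :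
              Set (GameFormula P) × Set (GameFormula P)) ∈ gameRules T :=
            Or.inl (Or.inl (Or.inl (Or.inl ⟨I, φ, hS, i, rfl⟩)))
          obtain ⟨ψ, hψ1, hψ2⟩ := hC _ hr (by
            intro x hx'; rcases hx' with rfl; exact hx)
          rcases hψ1 with rfl
          exact (ih i (conj_comp hS i)).1 hψ2
        · intro hs
          have hr : ((Set.range φ, {GameFormula.conj I φ}) :
              Set (GameFormula P) × Set (GameFormula P)) ∈ gameRules T :=
            Or.inl (Or.inl (Or.inr ⟨I, φ, hS, rfl⟩))
          obtain ⟨ψ, hψ1, hψ2⟩ := hC _ hr (by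
            rintro x ⟨i, rfl⟩; exact (ih i (conj_comp hS i)).2 (hs i))
          rcases hψ1 with rfl
          exact hψ2
      | disj I φ ih =>
        intro hS
        constructor
        · intro hx
          have hr : (({GameFormula.disj I φ}, Set.range φ) :
              Set (GameFormula P) × Set (GameFormula P)) ∈ gameRules T :=
            Or.inl (Or.inl (Or.inl (Or.inr ⟨I, φ, hS, rfl⟩)))
          obtain ⟨ψ, ⟨i, rfl⟩, hψ2⟩ := hC _ hr (by
            intro x hx'; rcases hx' with rfl; exact hx)
          exact ⟨i, (ih i (disj_comp hS i)).1 hψ2⟩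
        · rintro ⟨i, hi⟩
          have hr : (({φ i}, {GameFormula.disj I φ}) :
              Set (GameFormula P) × Set (GameFormula P)) ∈ gameRules T :=
            Or.inl (Or.inr ⟨I, φ, hS, i, rfl⟩)
          obtain ⟨ψ, hψ1, hψ2⟩ := hC _ hr (by
            intro x hx'; rcases hx' with rfl
            exact (ih i (disj_comp hS i)).2 hi)
          rcases hψ1 with rfl
          exact hψ2
    refine ⟨?_, key⟩
    intro s hsT h1
    have hS1 : s.1 ∈ subSet T := Or.inr ⟨s, hsT, Or.inl (Subformula.refl _)⟩
    have hS2 : s.2 ∈ subSet T := Or.inr ⟨s, hsT, Or.inr (Subformula.refl _)⟩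
    have hr : (({s.1}, {s.2}) : Set (GameFormula P) × Set (GameFormula P)) ∈
        gameRules T := Or.inr ⟨s, hsT, rfl⟩
    obtain ⟨ψ, hψ1, hψ2⟩ := hC _ hr (by
      intro x hx'; rcases hx' with rfl; exact (key _ hS1).2 h1)
    rcases hψ1 with rfl
    exact (key _ hS2).1 hψ2
end

section
/- Let (ℙ, Cov) be a formal space with set presentation BCov. A subset α ⊆ ℙ is a point of the formal space if and only if α is inhabited and closed under the finitary rules: ({p},{q}) for p ≤ q; ({p,q}, {r ∈ ℙ : r ≤ p and r ≤ q}) for all p,q ∈ ℙ; and ({p}, ↓S) for each S ∈ BCov(p), where ↓S = {r : ∃s ∈ S, r ≤ s}. Hence finitary NID implies the class of points of a set-presented formal space is set-generated. -/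
/-- A point of a formal space `(ℙ, Cov)`: an inhabited, upward closed, downward
directed subset splitting every cover of each of its elements. -/
def IsPoint {P : Type*} [Preorder P] (Cov : P → Set (Set P)) (α : Set P) : Prop :=
  α.Nonempty ∧
  (∀ a ∈ α, ∀ b, a ≤ b → b ∈ α) ∧
  (∀ a ∈ α, ∀ b ∈ α, ∃ c ∈ α, c ≤ a ∧ c ≤ b) ∧
  (∀ a ∈ α, ∀ S ∈ Cov a, (S ∩ α).Nonempty)

/-- The finitary rules associated to a presentation `BCov`:
`({p},{q})` for `p ≤ q`; `({p,q}, {r : r ≤ p ∧ r ≤ q})`; and `({p}, ↓S)` for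
`S ∈ BCov(p)`. -/
def pointRules {P : Type*} [Preorder P] (BCov : P → Set (Set P)) :
    Set (Set P × Set P) :=
  {r | ∃ p q : P, p ≤ q ∧ r = ({p}, {q})} ∪
  {r | ∃ p q : P, r = ({p, q}, {x : P | x ≤ p ∧ x ≤ q})} ∪
  {r | ∃ (p : P) (S : Set P), S ∈ BCov p ∧
        r = ({p}, {x : P | ∃ s ∈ S, x ≤ s})}

/-- `α` is a point iff `α` is inhabited and closed under the finitary
rules `pointRules BCov`; hence finitary NID implies that the class of points of a
set-presented formal space is set-generated. -/
theorem point_iff_closed_and_finNID_setGenerated (P : Type) [Preorder P]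
    (Cov BCov : P → Set (Set P))
    (hpres : ∀ α : Set P, α.Nonempty →
      (∀ a ∈ α, ∀ b, a ≤ b → b ∈ α) →
      (∀ a ∈ α, ∀ b ∈ α, ∃ c ∈ α, c ≤ a ∧ c ≤ b) →
      ((∀ a ∈ α, ∀ S ∈ Cov a, (S ∩ α).Nonempty) ↔
        (∀ a ∈ α, ∀ S ∈ BCov a, ({x : P | ∃ s ∈ S, x ≤ s} ∩ α).Nonempty))) :
    (∀ α : Set P, IsPoint Cov α ↔
      (α.Nonempty ∧ IsClosedUnder (pointRules BCov) α)) ∧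
    ((∀ (X : Type) (R : Set (Set X × Set X)), (∀ r ∈ R, r.1.Finite) →
        SetGenerated {Y : Set X | IsClosedUnder R Y}) →
      SetGenerated {α : Set P | IsPoint Cov α}) := by

  have main : ∀ α : Set P, IsPoint Cov α ↔
      (α.Nonempty ∧ IsClosedUnder (pointRules BCov) α) := by
    intro α
    constructor
    · rintro ⟨hne, hup, hdir, hcov⟩
      refine ⟨hne, ?_⟩
      rintro r (h | h) hsub
      · rcases h with h | h
        · obtain ⟨p, q, hpq, rfl⟩ := h
          exact ⟨q, rfl, hup p (hsub rfl) q hpq⟩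
        · obtain ⟨p, q, rfl⟩ := h
          obtain ⟨c, hc, hcp, hcq⟩ := hdir p (hsub (Or.inl rfl)) q (hsub (Or.inr rfl))
          exact ⟨c, ⟨hcp, hcq⟩, hc⟩
      · obtain ⟨p, S, hS, rfl⟩ := h
        exact (hpres α hne hup hdir).1 hcov p (hsub rfl) S hS
    · rintro ⟨hne, hcl⟩
      have hup : ∀ a ∈ α, ∀ b, a ≤ b → b ∈ α := by
        intro a ha b hab
        obtain ⟨x, hx1, hx2⟩ := hcl ({a}, {b}) (Or.inl (Or.inl ⟨a, b, hab, rfl⟩))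
          (by simpa using ha)
        simp only [Set.mem_singleton_iff] at hx1; subst hx1; exact hx2
      have hdir : ∀ a ∈ α, ∀ b ∈ α, ∃ c ∈ α, c ≤ a ∧ c ≤ b := by
        intro a ha b hb
        obtain ⟨c, hc1, hc2⟩ := hcl ({a, b}, {x : P | x ≤ a ∧ x ≤ b})
          (Or.inl (Or.inr ⟨a, b, rfl⟩))
          (by rintro x (rfl | rfl) <;> assumption)
        exact ⟨c, hc2, hc1.1, hc1.2⟩
      refine ⟨hne, hup, hdir, (hpres α hne hup hdir).2 ?_⟩
      intro a ha S hS
      exact hcl ({a}, {x : P | ∃ s ∈ S, x ≤ s}) (Or.inr ⟨a, S, hS, rfl⟩)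
        (by simpa using ha)
  refine ⟨main, ?_⟩
  intro hNID
  have hfin : ∀ r ∈ pointRules BCov, r.1.Finite := by
    rintro r ((h | h) | h)
    · obtain ⟨p, q, _, rfl⟩ := h; exact Set.finite_singleton p
    · obtain ⟨p, q, rfl⟩ := h; exact (Set.finite_singleton q).insert p
    · obtain ⟨p, S, _, rfl⟩ := h; exact Set.finite_singleton p
  obtain ⟨G, hG1, hG2⟩ := hNID P (pointRules BCov) hfin
  refine ⟨{β ∈ G | β.Nonempty}, ?_, ?_⟩
  · rintro β ⟨hβG, hβne⟩
    exact (main β).2 ⟨hβne, hG1 hβG⟩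
  · intro α hα x hx
    obtain ⟨hne, hcl⟩ := (main α).1 hα
    obtain ⟨β, hβG, hxβ, hβα⟩ := hG2 α hcl x hx
    exact ⟨β, ⟨hβG, ⟨x, hxβ⟩⟩, hxβ, hβα⟩
end

section
/- If every point of a set-presented formal space is minimal with respect to inclusion (the space is flat), and the class of points is set-generated, then the class of points is a set; in particular finitary NID implies that flat, set-presented formal spaces have a set of points. -/
/-- if all points of a formal space are minimal with respect to inclusion
(the space is flat) and the class of points is set-generated by `G`, then the class of
points coincides with the set `G`; in particular it is a set. -/
theorem flat_points_form_a_set (P : Type) [Preorder P]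
    (Cov : P → Set (Set P))
    (hflat : ∀ α β : Set P, IsPoint Cov α → IsPoint Cov β → β ⊆ α → β = α)
    (G : Set (Set P))
    (hG : G ⊆ {α : Set P | IsPoint Cov α})
    (hgen : ∀ α : Set P, IsPoint Cov α → ∀ a ∈ α, ∃ β ∈ G, a ∈ β ∧ β ⊆ α) :
    {α : Set P | IsPoint Cov α} = G := by
  apply Set.Subset.antisymm _ hG
  intro α hα
  obtain ⟨a, ha⟩ := hα.1
  obtain ⟨β, hβG, -, hβα⟩ := hgen α hα a ha
  rwa [← hflat α β hα (hG hβG) hβα]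
end
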